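/- Let G = (V,E) be a graph with |V| > 1 such that both G and its complement graph Ḡ are connected. Let G_∼ be the graph whose vertices are the maximal proper modules of G, in which two distinct maximal proper modules M and M' are adjacent if and only if some vertex of M is adjacent in G to some vertex of M'. Then G_∼ is a prime graph. -/

import Mathlib

/-- `M` is a module of the graph `G`: a nonempty vertex set such that every vertex
outside `M` is adjacent either to all of `M` or to none of `M`. -/
def IsModule {V : Type*} (G : SimpleGraph V) (M : Set V) : Prop :=
  M.Nonempty ∧ ∀ v ∉ M, ∀ w ∈ M, ∀ w' ∈ M, (G.Adj v w ↔ G.Adj v w')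

section Aux
variable {V : Type*}

lemma isModule_singleton (G : SimpleGraph V) (v : V) : IsModule G {v} := by
  refine ⟨⟨v, rfl⟩, ?_⟩
  rintro u hu w rfl w' rfl
  exact Iff.rfl

lemma disjoint_uniform {G : SimpleGraph V} {M M' : Set V} (hM : IsModule G M)
    (hM' : IsModule G M') (hd : Disjoint M M') :
    ∀ u ∈ M, ∀ w ∈ M', ∀ u' ∈ M, ∀ w' ∈ M', (G.Adj u w ↔ G.Adj u' w') := by
  intro u hu w hw u' hu' w' hw'
  have h1 : G.Adj u w ↔ G.Adj u w' :=
    hM'.2 u (fun h => hd.ne_of_mem hu h rfl) w hw w' hw'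
  have h2 : G.Adj w' u ↔ G.Adj w' u' :=
    hM.2 w' (fun h => hd.ne_of_mem h hw' rfl) u hu u' hu'
  rw [h1, G.adj_comm, h2, G.adj_comm]

lemma isModule_union {G : SimpleGraph V} {M M' : Set V} {v : V}
    (hM : IsModule G M) (hM' : IsModule G M') (hv : v ∈ M) (hv' : v ∈ M') :
    IsModule G (M ∪ M') := by
  refine ⟨⟨v, Or.inl hv⟩, ?_⟩
  intro u hu w hw w' hw'
  have huM : u ∉ M := fun h => hu (Or.inl h)
  have huM' : u ∉ M' := fun h => hu (Or.inr h)
  have key : ∀ x ∈ M ∪ M', (G.Adj u x ↔ G.Adj u v) := by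
    rintro x (hx | hx)
    · exact hM.2 u huM x hx v hv
    · exact hM'.2 u huM' x hx v hv'
  rw [key w hw, key w' hw']

lemma union_ne_univ {G : SimpleGraph V} (hG : G.Connected) (hGc : Gᶜ.Connected)
    {M M' : Set V} {v : V} (hM : IsModule G M) (hM' : IsModule G M')
    (hv : v ∈ M) (hv' : v ∈ M') (hMu : M ≠ Set.univ) (hM'u : M' ≠ Set.univ) :
    M ∪ M' ≠ Set.univ := by
  intro huniv
  obtain ⟨a₀, ha₀M'⟩ : ∃ a, a ∉ M' := by
    by_contra h; push_neg at h; exact hM'u (Set.eq_univ_iff_forall.2 h)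
  have ha₀M : a₀ ∈ M :=
    ((Set.eq_univ_iff_forall.1 huniv a₀).resolve_right ha₀M')
  obtain ⟨w₀, hw₀M⟩ : ∃ w, w ∉ M := by
    by_contra h; push_neg at h; exact hMu (Set.eq_univ_iff_forall.2 h)
  have hw₀M' : w₀ ∈ M' :=
    ((Set.eq_univ_iff_forall.1 huniv w₀).resolve_left hw₀M)
  have key : ∀ a, a ∉ M' → ∀ w ∈ M', (G.Adj a w ↔ G.Adj a₀ w₀) := by
    intro a haM' w hw
    have haM : a ∈ M := (Set.eq_univ_iff_forall.1 huniv a).resolve_right haM'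
    calc G.Adj a w ↔ G.Adj a w₀ := hM'.2 a haM' w hw w₀ hw₀M'
      _ ↔ G.Adj w₀ a := G.adj_comm _ _
      _ ↔ G.Adj w₀ a₀ := hM.2 w₀ hw₀M a haM a₀ ha₀M
      _ ↔ G.Adj a₀ w₀ := G.adj_comm _ _
  by_cases h0 : G.Adj a₀ w₀
  · obtain ⟨p⟩ := hGc.preconnected a₀ w₀
    obtain ⟨d, _, hd1, hd2⟩ := p.exists_boundary_dart {x | x ∉ M'} ha₀M' (not_not.2 hw₀M')
    have hadj : Gᶜ.Adj d.fst d.snd := d.adj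
    exact hadj.2 ((key d.fst hd1 d.snd (not_not.1 hd2)).2 h0)
  · obtain ⟨p⟩ := hG.preconnected a₀ w₀
    obtain ⟨d, _, hd1, hd2⟩ := p.exists_boundary_dart {x | x ∉ M'} ha₀M' (not_not.2 hw₀M')
    exact h0 ((key d.fst hd1 d.snd (not_not.1 hd2)).1 d.adj)

end Aux

/-- A maximal proper module of `G`: a module `M ⊊ V` that is not properly contained
in any other proper module. -/
def IsMaxProperModule {V : Type*} (G : SimpleGraph V) (M : Set V) : Prop :=
  IsModule G M ∧ M ≠ Set.univ ∧
    ∀ M' : Set V, IsModule G M' → M' ≠ Set.univ → M ⊆ M' → M = M'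

section Aux2
variable {V : Type*} [Fintype V]

lemma exists_maxModule {G : SimpleGraph V} (hcard : 1 < Fintype.card V)
    (hG : G.Connected) (hGc : Gᶜ.Connected) (v : V) :
    ∃ M, IsMaxProperModule G M ∧ v ∈ M := by
  classical
  set S : Set (Set V) := {N | IsModule G N ∧ N ≠ Set.univ ∧ v ∈ N} with hS
  have hsing : {v} ∈ S := by
    obtain ⟨u, hu⟩ := Fintype.exists_ne_of_one_lt_card hcard v
    refine ⟨isModule_singleton G v, ?_, rfl⟩
    intro h
    exact hu (by simpa using (h ▸ Set.mem_univ u : u ∈ ({v} : Set V)))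
  have hvS : v ∈ ⋃₀ S := ⟨{v}, hsing, rfl⟩
  have hmod : IsModule G (⋃₀ S) := by
    refine ⟨⟨v, hvS⟩, ?_⟩
    rintro u hu w ⟨N₁, hN₁, hw⟩ w' ⟨N₂, hN₂, hw'⟩
    have hu1 : u ∉ N₁ := fun h => hu ⟨N₁, hN₁, h⟩
    have hu2 : u ∉ N₂ := fun h => hu ⟨N₂, hN₂, h⟩
    calc G.Adj u w ↔ G.Adj u v := hN₁.1.2 u hu1 w hw v hN₁.2.2
      _ ↔ G.Adj u w' := (hN₂.1.2 u hu2 w' hw' v hN₂.2.2).symm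
  have hproper : ⋃₀ S ≠ Set.univ := by
    have hfin : S.Finite := Set.toFinite S
    have main : IsModule G ({v} ∪ ⋃₀ S) ∧ ({v} ∪ ⋃₀ S) ≠ Set.univ := by
      refine Set.Finite.induction_on_subset (motive := fun T _ => IsModule G ({v} ∪ ⋃₀ T) ∧ ({v} ∪ ⋃₀ T) ≠ Set.univ) S hfin ?_ ?_
      · simp only [Set.sUnion_empty, Set.union_empty]
        refine ⟨isModule_singleton G v, ?_⟩
        obtain ⟨u, hu⟩ := Fintype.exists_ne_of_one_lt_card hcard v
        intro h
        exact hu (by simpa using (h ▸ Set.mem_univ u : u ∈ ({v} : Set V)))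
      · rintro N T hN _ _ ⟨ihmod, ihproper⟩
        have heq : {v} ∪ ⋃₀ insert N T = N ∪ ({v} ∪ ⋃₀ T) := by
          rw [Set.sUnion_insert]
          ext x; simp [or_comm, or_assoc, or_left_comm]
        rw [heq]
        have hvT : v ∈ {v} ∪ ⋃₀ T := Or.inl rfl
        exact ⟨isModule_union hN.1 ihmod hN.2.2 hvT,
          union_ne_univ hG hGc hN.1 ihmod hN.2.2 hvT hN.2.1 ihproper⟩
    have := main
    have heq : {v} ∪ ⋃₀ S = ⋃₀ S := Set.union_eq_self_of_subset_left (by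
      intro x hx; rw [Set.mem_singleton_iff] at hx; exact hx ▸ hvS)
    rw [heq] at this
    exact this.2
  refine ⟨⋃₀ S, ⟨hmod, hproper, ?_⟩, hvS⟩
  intro M' hM'mod hM'proper hsub
  have : M' ∈ S := ⟨hM'mod, hM'proper, hsub hvS⟩
  exact Set.Subset.antisymm hsub (Set.subset_sUnion_of_mem this)

lemma maxModule_disjoint {G : SimpleGraph V} (hG : G.Connected) (hGc : Gᶜ.Connected)
    {M M' : Set V} (hM : IsMaxProperModule G M) (hM' : IsMaxProperModule G M')
    (hne : M ≠ M') : Disjoint M M' := by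
  rw [Set.disjoint_left]
  intro v hv hv'
  have hmod := isModule_union hM.1 hM'.1 hv hv'
  have hproper := union_ne_univ hG hGc hM.1 hM'.1 hv hv' hM.2.1 hM'.2.1
  have h1 := hM.2.2 _ hmod hproper Set.subset_union_left
  have h2 := hM'.2.2 _ hmod hproper Set.subset_union_right
  exact hne (h1.trans h2.symm)

end Aux2

/-- A graph is prime if all of its modules are trivial, i.e. singletons or the
whole vertex set. -/
def IsPrime {V : Type*} (G : SimpleGraph V) : Prop :=
  ∀ M : Set V, IsModule G M → (∃ x, M = {x}) ∨ M = Set.univ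

/-- The modular contraction `G_∼`: its vertices are the maximal proper modules of `G`,
two distinct such modules being adjacent iff some vertex of one is adjacent in `G`
to some vertex of the other. -/
def modularContraction {V : Type*} (G : SimpleGraph V) :
    SimpleGraph {M : Set V // IsMaxProperModule G M} where
  Adj M M' := M ≠ M' ∧ ∃ u ∈ M.1, ∃ v ∈ M'.1, G.Adj u v
  symm := by
    constructor
    rintro M M' ⟨hne, u, hu, v, hv, huv⟩
    exact ⟨hne.symm, v, hv, u, hu, huv.symm⟩
  loopless := by
    constructor
    rintro M ⟨hne, -⟩
    exact hne rfl

/-- (Gallai) If `G` has more than one vertex and both `G` and its complement are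
connected, then the modular contraction `G_∼` is a prime graph. -/
theorem modularContraction_isPrime {V : Type*} [Fintype V]
    (G : SimpleGraph V) (hcard : 1 < Fintype.card V)
    (hG : G.Connected) (hGc : Gᶜ.Connected) :
    IsPrime (modularContraction G) := by
  intro 𝓜 h𝓜
  by_cases huniv : 𝓜 = Set.univ
  · exact Or.inr huniv
  left
  obtain ⟨M₀, hM₀⟩ := h𝓜.1
  refine ⟨M₀, ?_⟩
  by_contra hnsing
  have hex : ∃ M₁ ∈ 𝓜, M₁ ≠ M₀ := by
    by_contra h; push_neg at h
    exact hnsing (Set.eq_singleton_iff_unique_mem.2 ⟨hM₀, h⟩)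
  obtain ⟨M₁, hM₁, hne10⟩ := hex
  obtain ⟨P, hP⟩ : ∃ P, P ∉ 𝓜 := by
    by_contra h; push_neg at h
    exact huniv (Set.eq_univ_iff_forall.2 h)
  -- W : union of all modules in 𝓜
  set W : Set V := ⋃ M ∈ 𝓜, (M : {M : Set V // IsMaxProperModule G M}).1 with hW
  have hmemW : ∀ x, x ∈ W ↔ ∃ M ∈ 𝓜, x ∈ (M : {M : Set V // IsMaxProperModule G M}).1 := by
    intro x; simp [hW]
  have hWmod : IsModule G W := by
    refine ⟨?_, ?_⟩
    · obtain ⟨x, hx⟩ := M₀.2.1.1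
      exact ⟨x, (hmemW x).2 ⟨M₀, hM₀, hx⟩⟩
    · intro u hu w hw w' hw'
      obtain ⟨MA, hMA, hwA⟩ := (hmemW w).1 hw
      obtain ⟨MB, hMB, hwB⟩ := (hmemW w').1 hw'
      obtain ⟨N, hN, huN⟩ := exists_maxModule hcard hG hGc u
      have hNnot : (⟨N, hN⟩ : {M : Set V // IsMaxProperModule G M}) ∉ 𝓜 := by
        intro h; exact hu ((hmemW u).2 ⟨⟨N, hN⟩, h, huN⟩)
      have hNA : (⟨N, hN⟩ : {M : Set V // IsMaxProperModule G M}) ≠ MA := by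
        intro h; exact hNnot (h ▸ hMA)
      have hNB : (⟨N, hN⟩ : {M : Set V // IsMaxProperModule G M}) ≠ MB := by
        intro h; exact hNnot (h ▸ hMB)
      have hdA : Disjoint N MA.1 :=
        maxModule_disjoint hG hGc hN MA.2 (fun h => hNA (Subtype.ext h))
      have hdB : Disjoint N MB.1 :=
        maxModule_disjoint hG hGc hN MB.2 (fun h => hNB (Subtype.ext h))
      have hA : G.Adj u w ↔ (modularContraction G).Adj ⟨N, hN⟩ MA := by
        constructor
        · exact fun h => ⟨hNA, u, huN, w, hwA, h⟩
        · rintro ⟨-, u', hu', v', hv', h⟩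
          exact (disjoint_uniform hN.1 MA.2.1 hdA u' hu' v' hv' u huN w hwA).1 h
      have hB : G.Adj u w' ↔ (modularContraction G).Adj ⟨N, hN⟩ MB := by
        constructor
        · exact fun h => ⟨hNB, u, huN, w', hwB, h⟩
        · rintro ⟨-, u', hu', v', hv', h⟩
          exact (disjoint_uniform hN.1 MB.2.1 hdB u' hu' v' hv' u huN w' hwB).1 h
      rw [hA, hB]
      exact h𝓜.2 ⟨N, hN⟩ hNnot MA hMA MB hMB
  have hWproper : W ≠ Set.univ := by
    obtain ⟨x, hx⟩ := P.2.1.1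
    intro h
    obtain ⟨M, hM, hxM⟩ := (hmemW x).1 (h ▸ Set.mem_univ x)
    have hMP : M ≠ P := fun h' => hP (h' ▸ hM)
    exact (maxModule_disjoint hG hGc M.2 P.2 (fun h' => hMP (Subtype.ext h'))).ne_of_mem
      hxM hx rfl
  have hsub1 : M₁.1 ⊆ W := fun x hx => (hmemW x).2 ⟨M₁, hM₁, hx⟩
  have heq1 : M₁.1 = W := M₁.2.2.2 W hWmod hWproper hsub1
  have hsub0 : M₀.1 ⊆ W := fun x hx => (hmemW x).2 ⟨M₀, hM₀, hx⟩
  obtain ⟨x, hx⟩ := M₀.2.1.1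
  exact (maxModule_disjoint hG hGc M₁.2 M₀.2
    (fun h => hne10 (Subtype.ext h))).ne_of_mem (heq1 ▸ hsub0 hx) hx rfl
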